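/- Let G be a finite group and let e ∈ F₂[G] satisfy e² = e and ê = e, where ê = Σ_g a_g g⁻¹ for e = Σ_g a_g g. Then the support (component set) M = {g ∈ G : coefficient of g in e is 1} contains no element of order 2. -/

import Mathlib

theorem support_of_lcd_idempotent_no_order_two {G : Type*} [Group G] [Fintype G]
    (e : MonoidAlgebra (ZMod 2) G)
    (hidem : e * e = e)
    (hadj : Finsupp.mapDomain (fun g : G => g⁻¹) e.coeff = e.coeff) :
    ∀ g ∈ e.coeff.support, orderOf g ≠ 2 := by
  classical
  intro g hg hord
  have hg2 : g * g = 1 := by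
    have := pow_orderOf_eq_one g
    rw [hord, pow_two] at this
    exact this
  have hginv : g⁻¹ = g := inv_eq_of_mul_eq_one_right hg2
  have hgne : g ≠ 1 := by
    intro h
    rw [h, orderOf_one] at hord
    norm_num at hord
  have he_inv : ∀ a : G, e.coeff a⁻¹ = e.coeff a := fun a => by
    conv_lhs => rw [← hadj]
    exact Finsupp.mapDomain_apply (fun x y h => inv_injective h) e.coeff a
  have key : (e * e).coeff g = ∑ p ∈ Finset.univ ×ˢ (Finset.univ : Finset G),
      (if p.1 * p.2 = g then e.coeff p.1 * e.coeff p.2 else 0) := by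
    rw [MonoidAlgebra.mul_apply, Finset.sum_product]
    rw [Finsupp.sum_fintype _ _ (by intro a; simp [Finsupp.sum])]
    refine Finset.sum_congr rfl fun a _ => ?_
    rw [Finsupp.sum_fintype _ _ (by intro b; simp)]
  have hzero : (∑ p ∈ Finset.univ ×ˢ (Finset.univ : Finset G),
      (if p.1 * p.2 = g then e.coeff p.1 * e.coeff p.2 else 0)) = 0 := by
    apply Finset.sum_ninvolution (fun p => (p.2⁻¹, p.1⁻¹))
    · intro p
      have heq : (if p.2⁻¹ * p.1⁻¹ = g then e.coeff p.2⁻¹ * e.coeff p.1⁻¹ else 0)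
          = (if p.1 * p.2 = g then e.coeff p.1 * e.coeff p.2 else 0) := by
        rw [he_inv, he_inv]
        have hiff : (p.2⁻¹ * p.1⁻¹ = g) ↔ (p.1 * p.2 = g) := by
          constructor <;> intro h
          · rw [← hginv, ← h, mul_inv_rev, inv_inv, inv_inv]
          · rw [← mul_inv_rev, h, hginv]
        simp only [hiff, mul_comm]
      rw [heq]
      exact CharTwo.add_self_eq_zero _
    · intro p hne h
      have h1 : p.2 = p.1⁻¹ := by
        have := congrArg Prod.fst h
        simp only at this
        rw [← this, inv_inv]
      apply hne
      rw [h1, mul_inv_cancel, if_neg (Ne.symm hgne)]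
    · intro p; exact Finset.mem_product.mpr ⟨Finset.mem_univ _, Finset.mem_univ _⟩
    · intro p; simp
  rw [hidem] at key
  exact (Finsupp.mem_support_iff.mp hg) (key.trans hzero)
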